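/- Combined left intersection for δ-separation: for any directed graph G = (V,E) and pairwise disjoint subsets A, B, C, D ⊆ V, if C ∪ D δ-separates A from B in G (A ir_δ B | C ∪ D) and A ∪ D δ-separates C from B in G (C ir_δ B | A ∪ D), then D δ-separates A ∪ C from B in G ((A ∪ C) ir_δ B | D). -/

import Mathlib

open Set

variable {V : Type*}

/-- There is a directed path (a sequence of ≥ 2 distinct vertices joined by
directed edges) from `v` to `w`; i.e. `v` is an ancestor of `w`. -/
def DirPathConn (E : V → V → Prop) (v w : V) : Prop :=
  ∃ l : List V, l.Chain' E ∧ l.Nodup ∧ 2 ≤ l.length ∧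
    l.head? = some v ∧ l.getLast? = some w

/-- `an(A)`: vertices outside `A` that are ancestors of some element of `A`. -/
def anSet (E : V → V → Prop) (A : Set V) : Set V :=
  {v | v ∉ A ∧ ∃ a ∈ A, DirPathConn E v a}

/-- `An(A) = A ∪ an(A)`, the smallest ancestral set containing `A`. -/
def AnSet (E : V → V → Prop) (A : Set V) : Set V := A ∪ anSet E A

/-- `pa(A)`: parents of `A` outside of `A`. -/
def paSet (E : V → V → Prop) (A : Set V) : Set V :=
  {v | v ∉ A ∧ ∃ a ∈ A, E v a}

/-- `cl(A) = A ∪ pa(A)`, the closure of `A`. -/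
def clSet (E : V → V → Prop) (A : Set V) : Set V := A ∪ paSet E A

/-- The induced subgraph `G_A` (as an edge relation on `V` supported on `A`). -/
def inducedGraph (E : V → V → Prop) (A : Set V) : V → V → Prop :=
  fun j k => E j k ∧ j ∈ A ∧ k ∈ A

/-- `G^B`: delete from `G` every directed edge starting in `B`. -/
def delOut (E : V → V → Prop) (B : Set V) : V → V → Prop :=
  fun j k => E j k ∧ j ∉ B

/-- The moral graph `G^m`: distinct `j, k` are adjacent iff they are joined by
an edge in some direction or have a common child. -/
def moralGraph (E : V → V → Prop) : V → V → Prop :=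
  fun j k => j ≠ k ∧ (E j k ∨ E k j ∨ ∃ c, E j c ∧ E k c)

/-- `l` is an undirected path from `v` to `w` in the undirected graph `H`:
a sequence of ≥ 2 distinct vertices, consecutive ones adjacent. -/
def IsUPath (H : V → V → Prop) (l : List V) (v w : V) : Prop :=
  l.Chain' H ∧ l.Nodup ∧ 2 ≤ l.length ∧
    l.head? = some v ∧ l.getLast? = some w

/-- `A ⊥_g B | C` in the undirected graph `H`: every path from a vertex of `A`
to a vertex of `B` contains a vertex of `C`. -/
def uSep (H : V → V → Prop) (A B C : Set V) : Prop :=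
  ∀ v ∈ A, ∀ w ∈ B, ∀ l : List V, IsUPath H l v w → ∃ c ∈ C, c ∈ l

/-- δ-separation for pairwise disjoint `A, B, C`: `A ⊥_g B | C` in the moral
graph of the subgraph of `G^B` induced by `An(A ∪ B ∪ C)`. -/
def deltaSepDisjoint (E : V → V → Prop) (A B C : Set V) : Prop :=
  uSep (moralGraph (inducedGraph (delOut E B) (AnSet E (A ∪ B ∪ C)))) A B C

/-- δ-separation `A ir_δ B | C` for general (not necessarily disjoint) sets:
`C \ B` δ-separates `A \ (B ∪ C)` from `B`. -/
def deltaSep (E : V → V → Prop) (A B C : Set V) : Prop :=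
  deltaSepDisjoint E (A \ (B ∪ C)) B (C \ B)

lemma combined_aux {H : V → V → Prop} {A B C D : Set V}
    (hAB : Disjoint A B) (hAC : Disjoint A C)
    (hBC : Disjoint B C)
    (h1 : uSep H A B (C ∪ D)) (h2 : uSep H C B (A ∪ D)) :
    ∀ n (l : List V), l.length ≤ n → ∀ v, v ∈ A ∪ C → ∀ w, w ∈ B →
      IsUPath H l v w → (∀ d ∈ D, d ∉ l) → False := by
  intro n
  induction n with
  | zero =>
    intro l hl v hv w hw hp hD
    obtain ⟨_, _, hlen, _, _⟩ := hp
    omega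
  | succ n ih =>
    intro l hl v hv w hw hp hD
    obtain ⟨hch, hnd, hlen, hhead, hlast⟩ := hp
    have key : ∃ c, (c ∈ A ∪ C) ∧ c ≠ v ∧ c ∈ l := by
      cases hv with
      | inl hvA =>
        obtain ⟨c, hc, hcl⟩ := h1 v hvA w hw l ⟨hch, hnd, hlen, hhead, hlast⟩
        have hcC : c ∈ C := hc.resolve_right (fun h => hD c h hcl)
        refine ⟨c, Or.inr hcC, fun h => ?_, hcl⟩
        exact Set.disjoint_left.mp hAC hvA (h ▸ hcC)
      | inr hvC =>
        obtain ⟨c, hc, hcl⟩ := h2 v hvC w hw l ⟨hch, hnd, hlen, hhead, hlast⟩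
        have hcA : c ∈ A := hc.resolve_right (fun h => hD c h hcl)
        refine ⟨c, Or.inl hcA, fun h => ?_, hcl⟩
        exact Set.disjoint_left.mp hAC (h ▸ hcA) hvC
    obtain ⟨c, hcAC, hcv, hcl⟩ := key
    obtain ⟨l₁, l₂, rfl⟩ := List.append_of_mem hcl
    have hl₁ : l₁ ≠ [] := by
      rintro rfl
      simp at hhead
      exact hcv hhead
    have hcw : c ≠ w := by
      intro h
      cases hcAC with
      | inl h' => exact Set.disjoint_left.mp hAB (h ▸ h') hw
      | inr h' => exact Set.disjoint_left.mp hBC hw (h ▸ h')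
    have hl₂ : l₂ ≠ [] := by
      rintro rfl
      rw [List.getLast?_concat] at hlast
      exact hcw (by injection hlast)
    refine ih (c :: l₂) ?_ c hcAC w hw ⟨?_, ?_, ?_, rfl, ?_⟩ ?_
    · have := List.length_append (as := l₁) (bs := c :: l₂)
      have h1' : 1 ≤ l₁.length := List.length_pos_iff.mpr hl₁
      simp only [List.length_append] at hl
      simp only [List.length_cons] at *
      omega
    · exact (List.isChain_append.mp hch).2.1
    · exact hnd.sublist (List.sublist_append_right l₁ (c :: l₂))
    · simp only [List.length_cons]
      have : 1 ≤ l₂.length := List.length_pos_iff.mpr hl₂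
      omega
    · obtain ⟨x, hx⟩ : ∃ x, (c :: l₂).getLast? = some x := by
        cases h : (c :: l₂).getLast? with
        | none => simp [List.getLast?_eq_none_iff] at h
        | some x => exact ⟨x, rfl⟩
      rw [List.getLast?_append, hx] at hlast
      simp only [Option.some_or] at hlast
      rw [hx, hlast]
    · intro d hd hdl
      exact hD d hd (List.mem_append_right l₁ hdl)

/-- Combined left intersection for δ-separation (pairwise disjoint sets). -/
theorem deltaSep_combined_left_intersection [Fintype V] (E : V → V → Prop)
    (hE : ∀ j k, E j k → j ≠ k) (A B C D : Set V)
    (hAB : Disjoint A B) (hAC : Disjoint A C) (hAD : Disjoint A D)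
    (hBC : Disjoint B C) (hBD : Disjoint B D) (hCD : Disjoint C D)
    (h1 : deltaSep E A B (C ∪ D)) (h2 : deltaSep E C B (A ∪ D)) :
    deltaSep E (A ∪ C) B D := by
  unfold deltaSep deltaSepDisjoint at h1 h2 ⊢
  have dA : A \ (B ∪ (C ∪ D)) = A :=
    sdiff_eq_left.mpr ((hAB.union_right (hAC.union_right hAD)))
  have dCD : (C ∪ D) \ B = C ∪ D :=
    sdiff_eq_left.mpr (hBC.symm.union_left hBD.symm)
  have dC : C \ (B ∪ (A ∪ D)) = C :=
    sdiff_eq_left.mpr (hBC.symm.union_right (hAC.symm.union_right hCD))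
  have dAD : (A ∪ D) \ B = A ∪ D :=
    sdiff_eq_left.mpr (hAB.union_left hBD.symm)
  have dACBD : (A ∪ C) \ (B ∪ D) = A ∪ C :=
    sdiff_eq_left.mpr ((hAB.union_left hBC.symm).union_right (hAD.union_left hCD))
  have dDB : D \ B = D := sdiff_eq_left.mpr hBD.symm
  rw [dA, dCD] at h1
  rw [dC, dAD] at h2
  rw [dACBD, dDB]
  have hU2 : C ∪ B ∪ (A ∪ D) = A ∪ B ∪ (C ∪ D) := by
    ext x; simp only [Set.mem_union]; tauto
  have hU3 : A ∪ C ∪ B ∪ D = A ∪ B ∪ (C ∪ D) := by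
    ext x; simp only [Set.mem_union]; tauto
  rw [hU2] at h2
  rw [hU3]
  intro v hv w hw l hp
  by_contra h
  push_neg at h
  exact combined_aux hAB hAC hBC h1 h2 l.length l le_rfl v hv w hw hp h
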